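/- For the classical density proportional to e^{δx − εz²/2} on the unit sphere, the mean of x satisfies the expansion ⟨x⟩ = δ/3 + δε/45 + O(3) (up to terms of third order in δ and ε jointly). -/

import Mathlib

open Asymptotics
noncomputable section

/-- Normalizing integral `∫_S e^{δx − εz²/2} dS` over the unit sphere, in
spherical coordinates. -/
def sphDen (δ ε : ℝ) : ℝ :=
  ∫ θ in (0 : ℝ)..Real.pi, ∫ φ in (0 : ℝ)..(2 * Real.pi),
    Real.sin θ *
      Real.exp (δ * (Real.sin θ * Real.cos φ) - ε * Real.cos θ ^ 2 / 2)

/-- Mean of the observable `g(x,z)` (with `x = sinθ cosφ`, `z = cosθ`) for the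
classical density proportional to `e^{δx − εz²/2}` on the unit sphere. -/
def sphAvg (g : ℝ → ℝ → ℝ) (δ ε : ℝ) : ℝ :=
  (∫ θ in (0 : ℝ)..Real.pi, ∫ φ in (0 : ℝ)..(2 * Real.pi),
      Real.sin θ * g (Real.sin θ * Real.cos φ) (Real.cos θ) *
        Real.exp (δ * (Real.sin θ * Real.cos φ) - ε * Real.cos θ ^ 2 / 2))
    / sphDen δ ε
open Real intervalIntegral MeasureTheory

lemma intInner (a₀ a₁ a₂ a₃ : ℝ) :
    (∫ φ in (0:ℝ)..(2*Real.pi),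
      (a₀ + a₁ * Real.cos φ + a₂ * Real.cos φ ^ 2 + a₃ * Real.cos φ ^ 3))
      = 2*Real.pi*a₀ + Real.pi*a₂ := by
  have c0 : IntervalIntegrable (fun _ : ℝ => a₀) volume 0 (2*Real.pi) :=
    (continuous_const).intervalIntegrable _ _
  have c1 : IntervalIntegrable (fun φ : ℝ => a₁ * Real.cos φ) volume 0 (2*Real.pi) :=
    (by fun_prop : Continuous fun φ : ℝ => a₁ * Real.cos φ).intervalIntegrable _ _
  have c2 : IntervalIntegrable (fun φ : ℝ => a₂ * Real.cos φ ^ 2) volume 0 (2*Real.pi) :=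
    (by fun_prop : Continuous fun φ : ℝ => a₂ * Real.cos φ ^ 2).intervalIntegrable _ _
  have c3 : IntervalIntegrable (fun φ : ℝ => a₃ * Real.cos φ ^ 3) volume 0 (2*Real.pi) :=
    (by fun_prop : Continuous fun φ : ℝ => a₃ * Real.cos φ ^ 3).intervalIntegrable _ _
  rw [integral_add ((c0.add c1).add c2) c3, integral_add (c0.add c1) c2, integral_add c0 c1,
      intervalIntegral.integral_const, intervalIntegral.integral_const_mul, intervalIntegral.integral_const_mul, intervalIntegral.integral_const_mul,
      integral_cos, integral_cos_sq, integral_cos_pow_three]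
  simp [Real.sin_two_pi, Real.cos_two_pi]
  ring

lemma intOuter (b₀ b₂ b₄ : ℝ) :
    (∫ θ in (0:ℝ)..Real.pi,
      Real.sin θ * (b₀ + b₂ * Real.cos θ ^ 2 + b₄ * Real.cos θ ^ 4))
      = 2*b₀ + 2/3*b₂ + 2/5*b₄ := by
  have e0 : (∫ θ in (0:ℝ)..Real.pi, Real.sin θ) = 2 := by norm_num
  have e2 : (∫ θ in (0:ℝ)..Real.pi, Real.sin θ * Real.cos θ ^ 2) = 2/3 := by
    rw [integral_sin_mul_cos_sq]; norm_num
  have e4 : (∫ θ in (0:ℝ)..Real.pi, Real.sin θ * Real.cos θ ^ 4) = 2/5 := by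
    have h := integral_sin_pow_odd_mul_cos_pow (a := (0:ℝ)) (b := Real.pi) 0 4
    norm_num at h
    exact h
  have c0 : IntervalIntegrable (fun θ : ℝ => b₀ * Real.sin θ) volume 0 Real.pi :=
    (by fun_prop : Continuous fun θ : ℝ => b₀ * Real.sin θ).intervalIntegrable _ _
  have c2 : IntervalIntegrable (fun θ : ℝ => b₂ * (Real.sin θ * Real.cos θ ^ 2)) volume 0 Real.pi :=
    (by fun_prop :
      Continuous fun θ : ℝ => b₂ * (Real.sin θ * Real.cos θ ^ 2)).intervalIntegrable _ _
  have c4 : IntervalIntegrable (fun θ : ℝ => b₄ * (Real.sin θ * Real.cos θ ^ 4)) volume 0 Real.pi :=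
    (by fun_prop :
      Continuous fun θ : ℝ => b₄ * (Real.sin θ * Real.cos θ ^ 4)).intervalIntegrable _ _
  rw [integral_congr (g := fun θ : ℝ => b₀ * Real.sin θ + b₂ * (Real.sin θ * Real.cos θ ^ 2)
        + b₄ * (Real.sin θ * Real.cos θ ^ 4)) (fun θ _ => by ring),
      integral_add (c0.add c2) c4, integral_add c0 c2,
      intervalIntegral.integral_const_mul, intervalIntegral.integral_const_mul, intervalIntegral.integral_const_mul, e0, e2, e4]
  ring

lemma exp_taylor {u : ℝ} (h : |u| ≤ 1) : |Real.exp u - (1 + u + u^2/2)| ≤ |u|^3 := by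
  have hb := Real.exp_bound h (n := 3) (by norm_num)
  have hs : (∑ m ∈ Finset.range 3, u ^ m / m.factorial) = 1 + u + u^2/2 := by
    norm_num [Finset.sum_range_succ, Nat.factorial]
  rw [hs] at hb
  refine hb.trans ?_
  have : ((3:ℕ).succ : ℝ) / ((3:ℕ).factorial * 3) ≤ 1 := by norm_num [Nat.factorial]
  nlinarith [pow_nonneg (abs_nonneg u) 3]

lemma monom_bound {a b n : ℝ} (ha : |a| ≤ n) (hb : |b| ≤ n) (i j : ℕ) :
    |a ^ i * b ^ j| ≤ n ^ i * n ^ j := by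
  rw [abs_mul, abs_pow, abs_pow]
  exact mul_le_mul (pow_le_pow_left₀ (abs_nonneg a) ha i) (pow_le_pow_left₀ (abs_nonneg b) hb j)
    (pow_nonneg (abs_nonneg b) j) (pow_nonneg ((abs_nonneg a).trans ha) i)

set_option maxHeartbeats 2000000 in
/-- the expansion `⟨x⟩ = δ/3 + δε/45 + O(3)` of the mean of `x`
for the classical density `∝ e^{δx − εz²/2}` on the unit sphere, up to terms
of third order in `(δ, ε)` jointly. -/
theorem mean_x_expansion :
    (fun p : ℝ × ℝ => sphAvg (fun x _ => x) p.1 p.2 - (p.1 / 3 + p.1 * p.2 / 45))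
      =O[nhds (0 : ℝ × ℝ)] fun p : ℝ × ℝ => ‖p‖ ^ 3 := by
  rw [Asymptotics.isBigO_iff]
  refine ⟨300, ?_⟩
  filter_upwards [Metric.ball_mem_nhds (0 : ℝ × ℝ) (by norm_num : (0:ℝ) < 1/2)] with p hp
  have hn : ‖p‖ < 1/2 := by simpa [Metric.mem_ball, dist_zero_right] using hp
  set δ := p.1 with hδdef
  set ε := p.2 with hεdef
  set n := ‖p‖ with hndef
  have hn0 : 0 ≤ n := norm_nonneg p
  have hδ : |δ| ≤ n := by simpa using norm_fst_le p
  have hε : |ε| ≤ n := by simpa using norm_snd_le p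
  set c := δ/3 + δ*ε/45 with hc
  -- basic bounds
  have hδl := (abs_le.1 hδ).1; have hδr := (abs_le.1 hδ).2
  have hεl := (abs_le.1 hε).1; have hεr := (abs_le.1 hε).2
  have hc1 : |c| ≤ 1 := by
    rw [hc]
    refine abs_le.2 ⟨?_, ?_⟩ <;> nlinarith [sq_nonneg (δ+ε), sq_nonneg (δ-ε)]
  have hX1 : ∀ θ φ : ℝ, |Real.sin θ * Real.cos φ| ≤ 1 := fun θ φ => by
    rw [abs_mul]
    exact mul_le_one₀ (Real.abs_sin_le_one θ) (abs_nonneg _) (Real.abs_cos_le_one φ)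
  have huN : ∀ θ φ : ℝ,
      |δ * (Real.sin θ * Real.cos φ) - ε * Real.cos θ ^ 2 / 2| ≤ 3/2*n := by
    intro θ φ
    refine (abs_sub _ _).trans ?_
    have h1 : |δ * (Real.sin θ * Real.cos φ)| ≤ n := by
      rw [abs_mul]
      calc |δ| * |Real.sin θ * Real.cos φ| ≤ n * 1 :=
        mul_le_mul hδ (hX1 θ φ) (abs_nonneg _) hn0
      _ = n := mul_one n
    have h2 : |ε * Real.cos θ ^ 2 / 2| ≤ n/2 := by
      rw [abs_div, abs_mul, abs_pow]
      have : |ε| * |Real.cos θ| ^ 2 ≤ n * 1 :=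
        mul_le_mul hε (pow_le_one₀ (abs_nonneg _) (Real.abs_cos_le_one θ))
          (by positivity) hn0
      rw [abs_two]
      linarith
    linarith
  have hu1 : ∀ θ φ : ℝ,
      |δ * (Real.sin θ * Real.cos φ) - ε * Real.cos θ ^ 2 / 2| ≤ 1 := fun θ φ =>
    (huN θ φ).trans (by linarith)
  -- interval integrability of parametric integrals
  have paramCont : ∀ f : ℝ → ℝ → ℝ, Continuous (fun q : ℝ × ℝ => f q.1 q.2) →
      IntervalIntegrable (fun θ => ∫ φ in (0:ℝ)..(2*Real.pi), f θ φ) volume 0 Real.pi := by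
    intro f hf
    exact (intervalIntegral.continuous_parametric_intervalIntegral_of_continuous'
      (f := f) hf 0 (2*Real.pi)).intervalIntegrable _ _
  -- denominator bound
  have hDen : 1 ≤ sphDen δ ε := by
    have inner_lb : ∀ θ ∈ Set.Icc (0:ℝ) Real.pi,
        Real.pi/2 * Real.sin θ ≤ ∫ φ in (0:ℝ)..(2*Real.pi), Real.sin θ *
          Real.exp (δ * (Real.sin θ * Real.cos φ) - ε * Real.cos θ ^ 2 / 2) := by
      intro θ hθ
      have hs : 0 ≤ Real.sin θ := Real.sin_nonneg_of_nonneg_of_le_pi hθ.1 hθ.2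
      have hmono := intervalIntegral.integral_mono_on (μ := volume)
        (f := fun _ : ℝ => Real.sin θ * (1/4))
        (g := fun φ : ℝ => Real.sin θ *
          Real.exp (δ * (Real.sin θ * Real.cos φ) - ε * Real.cos θ ^ 2 / 2))
        (by positivity : (0:ℝ) ≤ 2*Real.pi)
        (intervalIntegrable_const)
        ((by fun_prop : Continuous fun φ : ℝ => Real.sin θ *
          Real.exp (δ * (Real.sin θ * Real.cos φ) - ε * Real.cos θ ^ 2 / 2)).intervalIntegrable _ _)
        (by
          intro φ _
          have hlow := (abs_le.1 (huN θ φ)).1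
          have hexp := Real.add_one_le_exp
            (δ * (Real.sin θ * Real.cos φ) - ε * Real.cos θ ^ 2 / 2)
          have h14 : (1/4 : ℝ) ≤
              Real.exp (δ * (Real.sin θ * Real.cos φ) - ε * Real.cos θ ^ 2 / 2) := by
            nlinarith
          exact mul_le_mul_of_nonneg_left h14 hs)
      rw [intervalIntegral.integral_const, smul_eq_mul] at hmono
      calc Real.pi/2 * Real.sin θ = (2*Real.pi - 0) * (Real.sin θ * (1/4)) := by ring
      _ ≤ _ := hmono
    have houter := intervalIntegral.integral_mono_on (μ := volume)
      (f := fun θ : ℝ => Real.pi/2 * Real.sin θ)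
      (Real.pi_pos.le)
      ((by fun_prop : Continuous fun θ : ℝ => Real.pi/2 * Real.sin θ).intervalIntegrable _ _)
      (paramCont _ (by fun_prop))
      inner_lb
    have hval : (∫ θ in (0:ℝ)..Real.pi, Real.pi/2 * Real.sin θ) = Real.pi := by
      rw [intervalIntegral.integral_const_mul, integral_sin]
      norm_num
    rw [hval] at houter
    have : sphDen δ ε = ∫ θ in (0:ℝ)..Real.pi, ∫ φ in (0:ℝ)..(2*Real.pi), Real.sin θ *
        Real.exp (δ * (Real.sin θ * Real.cos φ) - ε * Real.cos θ ^ 2 / 2) := rfl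
    rw [this]
    linarith [Real.pi_gt_three]
  have hDpos : 0 < sphDen δ ε := by linarith
  -- the centered numerator G
  set G := ∫ θ in (0:ℝ)..Real.pi, ∫ φ in (0:ℝ)..(2*Real.pi),
      Real.sin θ * (Real.sin θ * Real.cos φ - c) *
        Real.exp (δ * (Real.sin θ * Real.cos φ) - ε * Real.cos θ ^ 2 / 2) with hG
  -- G = Num - c * Den
  have hG1 : G = (∫ θ in (0:ℝ)..Real.pi, ∫ φ in (0:ℝ)..(2*Real.pi),
      Real.sin θ * (Real.sin θ * Real.cos φ) *
        Real.exp (δ * (Real.sin θ * Real.cos φ) - ε * Real.cos θ ^ 2 / 2)) - c * sphDen δ ε := by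
    rw [hG]
    have inner1 : ∀ θ : ℝ, (∫ φ in (0:ℝ)..(2*Real.pi),
        Real.sin θ * (Real.sin θ * Real.cos φ - c) *
          Real.exp (δ * (Real.sin θ * Real.cos φ) - ε * Real.cos θ ^ 2 / 2))
        = (∫ φ in (0:ℝ)..(2*Real.pi), Real.sin θ * (Real.sin θ * Real.cos φ) *
            Real.exp (δ * (Real.sin θ * Real.cos φ) - ε * Real.cos θ ^ 2 / 2))
          - c * ∫ φ in (0:ℝ)..(2*Real.pi), Real.sin θ *
            Real.exp (δ * (Real.sin θ * Real.cos φ) - ε * Real.cos θ ^ 2 / 2) := by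
      intro θ
      rw [← intervalIntegral.integral_const_mul, ← integral_sub
        ((by fun_prop : Continuous fun φ : ℝ => Real.sin θ * (Real.sin θ * Real.cos φ) *
          Real.exp (δ * (Real.sin θ * Real.cos φ) - ε * Real.cos θ ^ 2 / 2)).intervalIntegrable _ _)
        ((by fun_prop : Continuous fun φ : ℝ => c * (Real.sin θ *
          Real.exp (δ * (Real.sin θ * Real.cos φ) - ε * Real.cos θ ^ 2 / 2))).intervalIntegrable _ _)]
      exact integral_congr (fun φ _ => by ring)
    rw [integral_congr (fun θ _ => inner1 θ)]
    rw [integral_sub (paramCont _ (by fun_prop))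
      ((paramCont _ (by fun_prop)).const_mul c), intervalIntegral.integral_const_mul]
    rfl
  -- split G = T + Rem
  set T := ∫ θ in (0:ℝ)..Real.pi, ∫ φ in (0:ℝ)..(2*Real.pi),
      Real.sin θ * (Real.sin θ * Real.cos φ - c) *
        (1 + (δ * (Real.sin θ * Real.cos φ) - ε * Real.cos θ ^ 2 / 2)
          + (δ * (Real.sin θ * Real.cos φ) - ε * Real.cos θ ^ 2 / 2)^2/2) with hT
  set Rem := ∫ θ in (0:ℝ)..Real.pi, ∫ φ in (0:ℝ)..(2*Real.pi),
      Real.sin θ * (Real.sin θ * Real.cos φ - c) *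
        (Real.exp (δ * (Real.sin θ * Real.cos φ) - ε * Real.cos θ ^ 2 / 2)
          - (1 + (δ * (Real.sin θ * Real.cos φ) - ε * Real.cos θ ^ 2 / 2)
            + (δ * (Real.sin θ * Real.cos φ) - ε * Real.cos θ ^ 2 / 2)^2/2)) with hRem
  have hG2 : G = T + Rem := by
    rw [hG, hT, hRem, ← integral_add (paramCont _ (by fun_prop)) (paramCont _ (by fun_prop))]
    refine integral_congr (fun θ _ => ?_)
    rw [← integral_add
      ((by fun_prop : Continuous fun φ : ℝ =>
        Real.sin θ * (Real.sin θ * Real.cos φ - c) *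
        (1 + (δ * (Real.sin θ * Real.cos φ) - ε * Real.cos θ ^ 2 / 2)
          + (δ * (Real.sin θ * Real.cos φ) - ε * Real.cos θ ^ 2 / 2)^2/2)).intervalIntegrable _ _)
      ((by fun_prop : Continuous fun φ : ℝ =>
        Real.sin θ * (Real.sin θ * Real.cos φ - c) *
        (Real.exp (δ * (Real.sin θ * Real.cos φ) - ε * Real.cos θ ^ 2 / 2)
          - (1 + (δ * (Real.sin θ * Real.cos φ) - ε * Real.cos θ ^ 2 / 2)
            + (δ * (Real.sin θ * Real.cos φ) - ε * Real.cos θ ^ 2 / 2)^2/2))).intervalIntegrable _ _)]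
    exact integral_congr (fun φ _ => by ring)
  -- evaluate T exactly
  set Qv := (2/135)*(δ*ε^2) - (2/9)*δ^3 - (1/30)*(δ*ε^2) - (2/135)*(δ^3*ε) - (1/450)*(δ*ε^3)
    with hQv
  have hTval : T = Real.pi * Qv := by
    rw [hT]
    have inner2 : ∀ θ : ℝ, (∫ φ in (0:ℝ)..(2*Real.pi),
        Real.sin θ * (Real.sin θ * Real.cos φ - c) *
        (1 + (δ * (Real.sin θ * Real.cos φ) - ε * Real.cos θ ^ 2 / 2)
          + (δ * (Real.sin θ * Real.cos φ) - ε * Real.cos θ ^ 2 / 2)^2/2))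
        = 2*Real.pi*(-(c * Real.sin θ *
            (1 - ε*Real.cos θ^2/2 + ε^2*Real.cos θ^4/8)))
          + Real.pi*(Real.sin θ*(δ*Real.sin θ^2*(1 - ε*Real.cos θ^2/2)
            - c*(δ^2*Real.sin θ^2/2))) := by
      intro θ
      calc (∫ φ in (0:ℝ)..(2*Real.pi),
          Real.sin θ * (Real.sin θ * Real.cos φ - c) *
          (1 + (δ * (Real.sin θ * Real.cos φ) - ε * Real.cos θ ^ 2 / 2)
            + (δ * (Real.sin θ * Real.cos φ) - ε * Real.cos θ ^ 2 / 2)^2/2))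
          = ∫ φ in (0:ℝ)..(2*Real.pi),
            ((-(c * Real.sin θ * (1 - ε*Real.cos θ^2/2 + ε^2*Real.cos θ^4/8)))
              + (Real.sin θ*(Real.sin θ*(1 - ε*Real.cos θ^2/2 + ε^2*Real.cos θ^4/8)
                  - c*(δ*Real.sin θ*(1 - ε*Real.cos θ^2/2)))) * Real.cos φ
              + (Real.sin θ*(δ*Real.sin θ^2*(1 - ε*Real.cos θ^2/2)
                  - c*(δ^2*Real.sin θ^2/2))) * Real.cos φ^2
              + (δ^2*Real.sin θ^4/2) * Real.cos φ^3) :=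
            integral_congr (fun φ _ => by ring)
        _ = _ := intInner _ _ _ _
    rw [integral_congr (fun θ _ => inner2 θ),
        integral_congr (g := fun θ : ℝ => Real.sin θ *
          ((-2*Real.pi*c + Real.pi*δ - Real.pi*c*δ^2/2)
            + (Real.pi*c*ε - Real.pi*δ - Real.pi*δ*ε/2 + Real.pi*c*δ^2/2) * Real.cos θ^2
            + (Real.pi*δ*ε/2 - Real.pi*c*ε^2/4) * Real.cos θ^4))
          (fun θ _ => by
            linear_combination (Real.sin θ * (Real.pi*δ*(1 - ε*Real.cos θ^2/2)
              - Real.pi*c*δ^2/2)) * (Real.sin_sq_add_cos_sq θ)),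
        intOuter, hQv, hc]
    ring
  -- monomial bounds
  have hm1 : |δ*ε^2| ≤ n^3 := by
    have h := monom_bound hδ hε 1 2
    simp only [pow_one] at h
    calc |δ*ε^2| ≤ n*n^2 := h
      _ = n^3 := by ring
  have hm2 : |δ^3| ≤ n^3 := by
    rw [abs_pow]; exact pow_le_pow_left₀ (abs_nonneg _) hδ 3
  have hm3 : |δ^3*ε| ≤ n^3 := by
    have h := monom_bound hδ hε 3 1
    simp only [pow_one] at h
    exact h.trans (mul_le_of_le_one_right (pow_nonneg hn0 3) (by linarith))
  have hm4 : |δ*ε^3| ≤ n^3 := by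
    have h := monom_bound hδ hε 1 3
    simp only [pow_one] at h
    refine h.trans ?_
    calc n*n^3 = n^3*n := by ring
      _ ≤ n^3 := mul_le_of_le_one_right (pow_nonneg hn0 3) (by linarith)
  have hQ : |Qv| ≤ n^3 := by
    obtain ⟨a1,b1⟩ := abs_le.1 hm1
    obtain ⟨a2,b2⟩ := abs_le.1 hm2
    obtain ⟨a3,b3⟩ := abs_le.1 hm3
    obtain ⟨a4,b4⟩ := abs_le.1 hm4
    rw [hQv]
    refine abs_le.2 ⟨by linarith, by linarith⟩
  have hTb : |T| ≤ 4*n^3 := by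
    rw [hTval, abs_mul, abs_of_pos Real.pi_pos]
    nlinarith [Real.pi_le_four, abs_nonneg Qv, pow_nonneg hn0 3]
  -- bound the remainder
  have hRemB : |Rem| ≤ 224*n^3 := by
    have inner_b : ∀ θ : ℝ, ‖∫ φ in (0:ℝ)..(2*Real.pi),
        Real.sin θ * (Real.sin θ * Real.cos φ - c) *
        (Real.exp (δ * (Real.sin θ * Real.cos φ) - ε * Real.cos θ ^ 2 / 2)
          - (1 + (δ * (Real.sin θ * Real.cos φ) - ε * Real.cos θ ^ 2 / 2)
            + (δ * (Real.sin θ * Real.cos φ) - ε * Real.cos θ ^ 2 / 2)^2/2))‖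
        ≤ 7*n^3 * (2*Real.pi) := by
      intro θ
      have h := intervalIntegral.norm_integral_le_of_norm_le_const
        (a := (0:ℝ)) (b := 2*Real.pi) (C := 7*n^3)
        (f := fun φ : ℝ => Real.sin θ * (Real.sin θ * Real.cos φ - c) *
          (Real.exp (δ * (Real.sin θ * Real.cos φ) - ε * Real.cos θ ^ 2 / 2)
            - (1 + (δ * (Real.sin θ * Real.cos φ) - ε * Real.cos θ ^ 2 / 2)
              + (δ * (Real.sin θ * Real.cos φ) - ε * Real.cos θ ^ 2 / 2)^2/2)))
        (fun φ _ => by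
          rw [Real.norm_eq_abs, abs_mul, abs_mul]
          have h2 : |Real.sin θ * Real.cos φ - c| ≤ 2 :=
            (abs_sub _ _).trans (by linarith [hX1 θ φ, hc1])
          have h3 := exp_taylor (hu1 θ φ)
          have h4 : |δ * (Real.sin θ * Real.cos φ) - ε * Real.cos θ ^ 2 / 2|^3
              ≤ (3/2*n)^3 := pow_le_pow_left₀ (abs_nonneg _) (huN θ φ) 3
          have h5 : |Real.sin θ| ≤ 1 := Real.abs_sin_le_one θ
          calc |Real.sin θ| * |Real.sin θ * Real.cos φ - c| *
              |Real.exp (δ * (Real.sin θ * Real.cos φ) - ε * Real.cos θ ^ 2 / 2)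
                - (1 + (δ * (Real.sin θ * Real.cos φ) - ε * Real.cos θ ^ 2 / 2)
                  + (δ * (Real.sin θ * Real.cos φ) - ε * Real.cos θ ^ 2 / 2)^2/2)|
              ≤ 1 * 2 * ((3/2*n)^3) :=
                mul_le_mul (mul_le_mul h5 h2 (abs_nonneg _) zero_le_one)
                  (h3.trans h4) (abs_nonneg _) (by norm_num)
            _ ≤ 7*n^3 := by nlinarith [pow_nonneg hn0 3])
      refine h.trans ?_
      rw [sub_zero, abs_of_pos (by positivity : (0:ℝ) < 2*Real.pi)]
    have h := intervalIntegral.norm_integral_le_of_norm_le_const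
      (a := (0:ℝ)) (b := Real.pi) (C := 7*n^3*(2*Real.pi))
      (f := fun θ : ℝ => ∫ φ in (0:ℝ)..(2*Real.pi),
        Real.sin θ * (Real.sin θ * Real.cos φ - c) *
        (Real.exp (δ * (Real.sin θ * Real.cos φ) - ε * Real.cos θ ^ 2 / 2)
          - (1 + (δ * (Real.sin θ * Real.cos φ) - ε * Real.cos θ ^ 2 / 2)
            + (δ * (Real.sin θ * Real.cos φ) - ε * Real.cos θ ^ 2 / 2)^2/2)))
      (fun θ _ => inner_b θ)
    rw [hRem]
    rw [Real.norm_eq_abs] at h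
    refine h.trans ?_
    rw [sub_zero, abs_of_pos Real.pi_pos]
    nlinarith [Real.pi_le_four, Real.pi_pos, pow_nonneg hn0 3,
      mul_nonneg (mul_nonneg (sub_nonneg.2 Real.pi_le_four)
        (by positivity : (0:ℝ) ≤ Real.pi + 4)) (pow_nonneg hn0 3)]
  -- assembly
  have hAvg : sphAvg (fun x _ => x) δ ε - c = G / sphDen δ ε := by
    have hD0 : sphDen δ ε ≠ 0 := ne_of_gt hDpos
    have h2 : G / sphDen δ ε = (∫ θ in (0:ℝ)..Real.pi, ∫ φ in (0:ℝ)..(2*Real.pi),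
        Real.sin θ * (Real.sin θ * Real.cos φ) *
          Real.exp (δ * (Real.sin θ * Real.cos φ) - ε * Real.cos θ ^ 2 / 2)) / sphDen δ ε - c := by
      rw [hG1, sub_div, mul_div_assoc, div_self hD0, mul_one]
    rw [h2]
    congr 1
  calc ‖sphAvg (fun x _ => x) δ ε - c‖ = |G| / sphDen δ ε := by
        rw [Real.norm_eq_abs, hAvg, abs_div, abs_of_pos hDpos]
    _ ≤ |G| := div_le_self (abs_nonneg _) hDen
    _ ≤ |T| + |Rem| := by rw [hG2]; exact abs_add_le _ _
    _ ≤ 4*n^3 + 224*n^3 := add_le_add hTb hRemB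
    _ ≤ 300 * ‖n^3‖ := by
        rw [Real.norm_eq_abs, abs_of_nonneg (pow_nonneg hn0 3)]
        nlinarith [pow_nonneg hn0 3]
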